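/- In the clique-reduction SMTI instance I (defined in the context), if M is a complete stable matching, then the set W of r vertices of G corresponding to the type-4 women matched to type-2 men induces a clique in G. -/

import Mathlib

variable (V : Type) [Fintype V] [DecidableEq V] (G : SimpleGraph V) [DecidableRel G.Adj] (r : ℕ)

/-- The men of the clique-reduction instance: type-1 men are the edges of `G`,
then `r` type-2 men and `card V − r` type-3 men. -/
abbrev CliqueMen : Type :=
  {e : Sym2 V // e ∈ G.edgeFinset} ⊕ (Fin r ⊕ Fin (Fintype.card V - r))

/-- The women of the clique-reduction instance: type-4 women are the vertices of
`G`, then `binom(r,2)` type-5 women and `m − binom(r,2)` type-6 women. -/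
abbrev CliqueWom : Type :=
  V ⊕ (Fin (r.choose 2) ⊕ Fin (G.edgeFinset.card - r.choose 2))

/-- Preference list of a man (smaller rank = more preferred, `none` = unacceptable).
A type-1 man `e` ranks: type 6 (rank 0), then his two exceptional women — the
endpoints of `e` — (rank 1), then type 5 (rank 2), then the other type-4 women
(rank 3).  Types 2 and 3 find exactly the type-4 women acceptable, all tied. -/
def cliqueManRank : CliqueMen V G r → CliqueWom V G r → Option ℕ
  | Sum.inl e, Sum.inl v => if v ∈ (e.1 : Sym2 V) then some 1 else some 3
  | Sum.inl _, Sum.inr (Sum.inl _) => some 2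
  | Sum.inl _, Sum.inr (Sum.inr _) => some 0
  | Sum.inr _, Sum.inl _ => some 0
  | Sum.inr _, Sum.inr _ => none

/-- Preference list of a woman: type-4 women rank type 2 (rank 0), then type 1
(rank 1), then type 3 (rank 2); types 5 and 6 find exactly the type-1 men
acceptable, all tied. -/
def cliqueWomRank : CliqueWom V G r → CliqueMen V G r → Option ℕ
  | Sum.inl _, Sum.inl _ => some 1
  | Sum.inl _, Sum.inr (Sum.inl _) => some 0
  | Sum.inl _, Sum.inr (Sum.inr _) => some 2
  | Sum.inr _, Sum.inl _ => some 0
  | Sum.inr _, Sum.inr _ => none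

/-- `OptLt a b`: rank `a` is strictly better than rank `b` (where `none` means
unacceptable/unmatched and any acceptable rank beats it). -/
def OptLt (a b : Option ℕ) : Prop := ∃ x, a = some x ∧ ∀ y, b = some y → x < y

/-- A complete matching (a bijection between men and women) is stable if it only
matches mutually acceptable pairs and admits no blocking pair. -/
def CliqueStableCSM (M : CliqueMen V G r ≃ CliqueWom V G r) : Prop :=
  (∀ a, (cliqueManRank V G r a (M a)).isSome = true ∧
        (cliqueWomRank V G r (M a) a).isSome = true) ∧
  ¬ ∃ a w, M a ≠ w ∧ OptLt (cliqueManRank V G r a w) (cliqueManRank V G r a (M a)) ∧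
      OptLt (cliqueWomRank V G r w a) (cliqueWomRank V G r w (M.symm w))

/-- If `M` is a complete stable matching of the clique-reduction
instance, then the set `W` of vertices whose type-4 women are matched to type-2
men has cardinality `r` and induces a clique in `G`. -/
theorem complete_stable_matching_gives_clique
    (hr : r ≤ Fintype.card V) (hm : r.choose 2 ≤ G.edgeFinset.card)
    (M : CliqueMen V G r ≃ CliqueWom V G r)
    (hM : CliqueStableCSM V G r M) :
    (Finset.univ.filter fun v : V =>
        ∃ i : Fin r, M (Sum.inr (Sum.inl i)) = Sum.inl v).card = r ∧
    G.IsClique ((Finset.univ.filter fun v : V =>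
        ∃ i : Fin r, M (Sum.inr (Sum.inl i)) = Sum.inl v) : Finset V) := by
  classical
  obtain ⟨hacc, hstab⟩ := hM
  -- every type-2/3 man is matched to a type-4 woman
  have hg : ∀ x : Fin r ⊕ Fin (Fintype.card V - r), ∃ v : V, M (Sum.inr x) = Sum.inl v := by
    intro x
    have hs := (hacc (Sum.inr x)).1
    cases h : M (Sum.inr x) with
    | inl v => exact ⟨v, rfl⟩
    | inr y =>
      rw [h] at hs
      cases y <;> simp [cliqueManRank] at hs
  choose g hgspec using hg
  have hginj : Function.Injective g := by
    intro x y hxy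
    have : M (Sum.inr x) = M (Sum.inr y) := by
      rw [hgspec, hgspec]; exact congrArg Sum.inl hxy
    exact Sum.inr_injective (M.injective this)
  have hcard : Fintype.card (Fin r ⊕ Fin (Fintype.card V - r)) = Fintype.card V := by
    simp [Nat.add_sub_cancel' hr]
  have hgsurj : Function.Surjective g :=
    ((Fintype.bijective_iff_injective_and_card g).mpr ⟨hginj, hcard⟩).2
  -- every type-5 woman is matched to a type-1 man
  have hh : ∀ j : Fin (r.choose 2), ∃ e : {e : Sym2 V // e ∈ G.edgeFinset},
      M.symm (Sum.inr (Sum.inl j)) = Sum.inl e := by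
    intro j
    have hs := (hacc (M.symm (Sum.inr (Sum.inl j)))).2
    rw [M.apply_symm_apply] at hs
    cases h : M.symm (Sum.inr (Sum.inl j)) with
    | inl e => exact ⟨e, rfl⟩
    | inr y =>
      rw [h] at hs
      cases y <;> simp [cliqueWomRank] at hs
  choose h5 hh5 using hh
  have hhspec : ∀ j, M (Sum.inl (h5 j)) = Sum.inr (Sum.inl j) := by
    intro j
    rw [← hh5 j, M.apply_symm_apply]
  set W : Finset V := Finset.univ.filter fun v : V =>
      ∃ i : Fin r, M (Sum.inr (Sum.inl i)) = Sum.inl v with hWdef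
  have hmemW : ∀ v, v ∈ W ↔ ∃ i : Fin r, M (Sum.inr (Sum.inl i)) = Sum.inl v := by
    intro v; simp [hWdef]
  -- endpoints of edges matched to type-5 women lie in W
  have hend : ∀ j : Fin (r.choose 2), ∀ v : V, v ∈ ((h5 j).1 : Sym2 V) → v ∈ W := by
    intro j v hv
    obtain ⟨x, hx⟩ := hgsurj v
    cases x with
    | inl i => exact (hmemW v).mpr ⟨i, by rw [hgspec]; exact congrArg Sum.inl hx⟩
    | inr k =>
      exfalso
      apply hstab
      refine ⟨Sum.inl (h5 j), Sum.inl v, ?_, ?_, ?_⟩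
      · rw [hhspec]; simp
      · rw [hhspec]
        refine ⟨1, ?_, ?_⟩
        · simp [cliqueManRank, hv]
        · intro y hy
          simp only [cliqueManRank, Option.some.injEq] at hy
          omega
      · have hsymm : M.symm (Sum.inl v) = Sum.inr (Sum.inr k) := by
          have := hgspec (Sum.inr k)
          rw [hx] at this
          rw [← this, M.symm_apply_apply]
        rw [hsymm]
        refine ⟨1, ?_, ?_⟩
        · simp [cliqueWomRank]
        · intro y hy
          simp only [cliqueWomRank, Option.some.injEq] at hy
          omega
  -- W has cardinality r
  have hf : ∀ i : Fin r, M (Sum.inr (Sum.inl i)) = Sum.inl (g (Sum.inl i)) :=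
    fun i => hgspec (Sum.inl i)
  have hWimg : W = Finset.image (fun i : Fin r => g (Sum.inl i)) Finset.univ := by
    ext v
    rw [hmemW]
    simp only [Finset.mem_image, Finset.mem_univ, true_and]
    constructor
    · rintro ⟨i, hi⟩
      exact ⟨i, Sum.inl_injective (by rw [← hf i, hi])⟩
    · rintro ⟨i, hi⟩
      exact ⟨i, by rw [hf i, hi]⟩
  have hWcard : W.card = r := by
    rw [hWimg, Finset.card_image_of_injective _
      (fun i j hij => Sum.inl_injective (hginj hij : (Sum.inl i : Fin r ⊕ _) = Sum.inl j)),
      Finset.card_univ, Fintype.card_fin]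
  -- the set of edges matched to type-5 women
  set T : Finset (Sym2 V) := Finset.image (fun j => ((h5 j).1 : Sym2 V)) Finset.univ with hTdef
  have hTcard : T.card = r.choose 2 := by
    rw [hTdef, Finset.card_image_of_injective, Finset.card_univ, Fintype.card_fin]
    intro j j' hjj
    have h1 : M (Sum.inl (h5 j)) = M (Sum.inl (h5 j')) :=
      congrArg M (congrArg Sum.inl (Subtype.ext hjj))
    rw [hhspec, hhspec] at h1
    exact Sum.inl_injective (Sum.inr_injective h1)
  set Q : Finset (Sym2 V) := Finset.image (fun p : V × V => s(p.1, p.2)) W.offDiag with hQdef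
  have hTQ : T ⊆ Q := by
    intro z hz
    rw [hTdef] at hz
    simp only [Finset.mem_image, Finset.mem_univ, true_and] at hz
    obtain ⟨j, hj⟩ := hz
    have hedge := (h5 j).2
    rw [SimpleGraph.mem_edgeFinset] at hedge
    have hdiag := G.not_isDiag_of_mem_edgeSet hedge
    induction z using Sym2.ind with
    | _ v w =>
      have hv : v ∈ W := hend j v (by rw [hj]; exact Sym2.mem_mk_left v w)
      have hw : w ∈ W := hend j w (by rw [hj]; exact Sym2.mem_mk_right v w)
      have hne : v ≠ w := by
        intro hvw
        rw [hj] at hdiag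
        exact hdiag (by rw [hvw]; exact Sym2.isDiag_iff_proj_eq.mpr rfl)
      rw [hQdef]
      exact Finset.mem_image.mpr ⟨(v, w), Finset.mem_offDiag.mpr ⟨hv, hw, hne⟩, rfl⟩
  have hQle : Q.card ≤ r.choose 2 := by
    have h2 : 2 * Q.card ≤ W.offDiag.card := by
      apply Finset.mul_card_image_le_card
      intro z hz
      simp only [Finset.mem_image] at hz
      obtain ⟨⟨v, w⟩, hp, hpz⟩ := hz
      obtain ⟨hv, hw, hne⟩ := Finset.mem_offDiag.mp hp
      have hmem1 : (v, w) ∈ W.offDiag.filter (fun p : V × V => s(p.1, p.2) = z) :=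
        Finset.mem_filter.mpr ⟨hp, hpz⟩
      have hmem2 : (w, v) ∈ W.offDiag.filter (fun p : V × V => s(p.1, p.2) = z) :=
        Finset.mem_filter.mpr ⟨Finset.mem_offDiag.mpr ⟨hw, hv, hne.symm⟩,
          by rw [← hpz]; exact Sym2.eq_swap⟩
      have : (1 : ℕ) < (W.offDiag.filter (fun p : V × V => s(p.1, p.2) = z)).card :=
        Finset.one_lt_card.mpr ⟨(v, w), hmem1, (w, v), hmem2,
          fun hc => hne (congrArg Prod.fst hc)⟩
      omega
    rw [Finset.offDiag_card, hWcard] at h2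
    have heven : 2 ∣ r * (r - 1) := by
      rcases Nat.eq_zero_or_pos r with h0 | h0
      · simp [h0]
      · have := Nat.even_mul_succ_self (r - 1)
        rw [Nat.sub_add_cancel h0] at this
        exact (Nat.mul_comm (r-1) r ▸ this).two_dvd
    have hch : 2 * r.choose 2 = r * r - r := by
      rw [Nat.choose_two_right, Nat.mul_div_cancel' heven]
      rcases Nat.eq_zero_or_pos r with h0 | h0
      · simp [h0]
      · obtain ⟨n, rfl⟩ := Nat.exists_eq_add_of_le h0
        simp only [Nat.add_sub_cancel_left] at *
        ring_nf
        omega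
    omega
  have hTQeq : T = Q := Finset.eq_of_subset_of_card_le hTQ (by rw [hTcard]; exact hQle)
  refine ⟨hWcard, ?_⟩
  intro v hv w hw hvw
  have hv' : v ∈ W := hv
  have hw' : w ∈ W := hw
  have hzQ : s(v, w) ∈ Q := by
    rw [hQdef]
    exact Finset.mem_image.mpr ⟨(v, w), Finset.mem_offDiag.mpr ⟨hv', hw', hvw⟩, rfl⟩
  rw [← hTQeq, hTdef] at hzQ
  simp only [Finset.mem_image, Finset.mem_univ, true_and] at hzQ
  obtain ⟨j, hj⟩ := hzQ
  have hedge := (h5 j).2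
  rw [hj, SimpleGraph.mem_edgeFinset, SimpleGraph.mem_edgeSet] at hedge
  exact hedge
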